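/- Let P be a finite point set in general position in the plane such that (i) every triangle formed by three consecutive hull vertices of P contains a point of P in its interior, and (ii) for every edge q q⁺ of the convex hull of I(P), the open outer half-plane H(q) contains exactly one hull vertex of P. Then for every hull vertex p_j of P, the region CH(P) ∩ Int(A(p_j; q_j, p_{j−1})) contains no point of P, where q_j is the first interior point following p_{j−1} on the hull of P \ {p_j} and A(a; b, c) is the angular domain at a bounded by rays ab and ac containing segment bc. -/

import Mathlib

/-- Points of the plane. -/
abbrev Pt := ℝ × ℝ

/-- A finite point set is in general position if no three of its points are collinear. -/
def GenPos (P : Finset Pt) : Prop :=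
  ∀ p ∈ P, ∀ q ∈ P, ∀ r ∈ P, p ≠ q → q ≠ r → p ≠ r → ¬ Collinear ℝ ({p, q, r} : Set Pt)

open Classical in
/-- The vertices of the convex hull of `P`. -/
noncomputable def hullB (P : Finset Pt) : Finset Pt :=
  P.filter (fun p => p ∉ convexHull ℝ ((P : Set Pt) \ {p}))

open Classical in
/-- The interior points of `P` (the points that are not hull vertices). -/
noncomputable def intI (P : Finset Pt) : Finset Pt := P \ hullB P

/-- A closed convex polygon with vertices in `P`. -/
def IsPolygonOn (P : Finset Pt) (C : Set Pt) : Prop :=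
  ∃ V : Finset Pt, V ⊆ P ∧ 3 ≤ V.card ∧ C = convexHull ℝ (V : Set Pt)

/-- A convex decomposition of a region `R` with respect to `P`: closed convex polygons
with vertices in `P`, pairwise disjoint interiors, union `R`, and no point of `P`
in the interior of any polygon. -/
def IsConvexDecompOfRegion (P : Finset Pt) (R : Set Pt) (D : Finset (Set Pt)) : Prop :=
  (∀ C ∈ D, IsPolygonOn P C) ∧
  (∀ C ∈ D, ∀ C' ∈ D, C ≠ C' → interior C ∩ interior C' = ∅) ∧
  (⋃ C ∈ D, C) = R ∧
  (∀ C ∈ D, ∀ p ∈ P, (p : Pt) ∉ interior C)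

/-- A convex decomposition of the point set `P`. -/
def IsConvexDecomp (P : Finset Pt) (D : Finset (Set Pt)) : Prop :=
  IsConvexDecompOfRegion P (convexHull ℝ (P : Set Pt)) D

/-- `uMin P` is the minimum number of polygons in a convex decomposition of `P`. -/
noncomputable def uMin (P : Finset Pt) : ℕ :=
  sInf {n | ∃ D : Finset (Set Pt), IsConvexDecomp P D ∧ D.card = n}

/-- `p` and `q` are the endpoints of an edge of the convex hull of `P`. -/
def IsHullEdge (P : Finset Pt) (p q : Pt) : Prop :=
  p ∈ hullB P ∧ q ∈ hullB P ∧ p ≠ q ∧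
    segment ℝ p q ⊆ frontier (convexHull ℝ (P : Set Pt))

/-- `H` is the open half-plane with `q` and `q'` on its boundary containing
no point of `I` (the outer half-plane of the edge `q q'` of `CH(I)`). -/
def IsOuterHalf (I : Finset Pt) (q q' : Pt) (H : Set Pt) : Prop :=
  ∃ f : Pt →ₗ[ℝ] ℝ, f ≠ 0 ∧ f q = f q' ∧ H = {x | f q < f x} ∧ ∀ r ∈ I, f r ≤ f q

/-- The angular domain at `a` bounded by the rays from `a` through `b` and through `c`,
containing the segment `b c`. -/
def angDom (a b c : Pt) : Set Pt :=
  {x | ∃ s t : ℝ, 0 ≤ s ∧ 0 ≤ t ∧ x = a + s • (b - a) + t • (c - a)}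

/-- Every triangle of three consecutive hull vertices of `P` contains a point of `P`
in its interior. -/
def TripleFilled (P : Finset Pt) : Prop :=
  ∀ a p c : Pt, IsHullEdge P a p → IsHullEdge P p c → a ≠ c →
    (interior (convexHull ℝ ({a, p, c} : Set Pt)) ∩ (P : Set Pt)).Nonempty

/-- Every outer open half-plane of a hull edge of `I(P)` contains exactly one
hull vertex of `P`. -/
def OuterOne (P : Finset Pt) : Prop :=
  ∀ q q' H, IsHullEdge (intI P) q q' → IsOuterHalf (intI P) q q' H →
    ((hullB P : Set Pt) ∩ H).ncard = 1
namespace LemmaDJ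

lemma apply_eq (f : Pt →ₗ[ℝ] ℝ) (v : Pt) : f v = f (1,0) * v.1 + f (0,1) * v.2 := by
  have hv : v = v.1 • ((1:ℝ),(0:ℝ)) + v.2 • ((0:ℝ),(1:ℝ)) := by
    apply Prod.ext <;> simp
  have h := congrArg f hv
  rw [map_add, map_smul, map_smul, smul_eq_mul, smul_eq_mul] at h
  rw [h]; ring

lemma ker_rep {A B : ℝ} (hAB : ¬(A = 0 ∧ B = 0)) {w : Pt} (hw : A * w.1 + B * w.2 = 0) :
    ∃ t : ℝ, w = t • ((-B, A) : Pt) := by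
  by_cases hA : A = 0
  · have hB : B ≠ 0 := fun h => hAB ⟨hA, h⟩
    have hw2 : w.2 = 0 := by
      rw [hA, zero_mul, zero_add] at hw
      exact (mul_eq_zero.mp hw).resolve_left hB
    refine ⟨-w.1 / B, Prod.ext ?_ ?_⟩
    · show w.1 = (-w.1 / B) * (-B)
      field_simp
    · show w.2 = (-w.1 / B) * A
      rw [hA, mul_zero, hw2]
  · refine ⟨w.2 / A, Prod.ext ?_ ?_⟩
    · show w.1 = (w.2 / A) * (-B)
      field_simp
      nlinarith [hw]
    · show w.2 = (w.2 / A) * A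
      field_simp

lemma collinear3 {p q r v : Pt} (h1 : ∃ t:ℝ, q - p = t • v) (h2 : ∃ t:ℝ, r - p = t • v) :
    Collinear ℝ ({p, q, r} : Set Pt) := by
  obtain ⟨t1, h1⟩ := h1; obtain ⟨t2, h2⟩ := h2
  rw [collinear_iff_of_mem (Set.mem_insert p {q, r})]
  refine ⟨v, ?_⟩
  intro x hx
  simp only [Set.mem_insert_iff, Set.mem_singleton_iff] at hx
  rcases hx with rfl | rfl | rfl
  · exact ⟨0, by simp⟩
  · exact ⟨t1, by rw [vadd_eq_add]; exact sub_eq_iff_eq_add.mp h1⟩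
  · exact ⟨t2, by rw [vadd_eq_add]; exact sub_eq_iff_eq_add.mp h2⟩

lemma collinear_of_linear_eq (f : Pt →ₗ[ℝ] ℝ) (hf : f ≠ 0) (p q r : Pt)
    (hq : f q = f p) (hr : f r = f p) : Collinear ℝ ({p, q, r} : Set Pt) := by
  have hAB : ¬(f (1,0) = 0 ∧ f (0,1) = 0) := by
    rintro ⟨h1, h2⟩
    apply hf
    apply LinearMap.ext
    intro v
    rw [apply_eq, h1, h2]
    simp
  refine collinear3 (v := ((-(f (0,1)), f (1,0)) : Pt)) (ker_rep hAB ?_) (ker_rep hAB ?_)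
  · have h := apply_eq f (q - p)
    rw [map_sub, hq, sub_self] at h
    linarith
  · have h := apply_eq f (r - p)
    rw [map_sub, hr, sub_self] at h
    linarith

noncomputable def crossL (v : Pt) : Pt →ₗ[ℝ] ℝ :=
  (-v.2) • LinearMap.fst ℝ ℝ ℝ + v.1 • LinearMap.snd ℝ ℝ ℝ

@[simp] lemma crossL_apply (v x : Pt) : crossL v x = -v.2 * x.1 + v.1 * x.2 := by
  simp [crossL]

lemma angDom_le {a b c : Pt} (k : Pt →ₗ[ℝ] ℝ) (hb : k (b - a) ≤ 0) (hc : k (c - a) ≤ 0) :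
    ∀ x ∈ angDom a b c, k x ≤ k a := by
  rintro x ⟨s, t, hs, ht, rfl⟩
  have h : k (a + s • (b - a) + t • (c - a)) = k a + s * k (b-a) + t * k (c-a) := by
    simp [smul_eq_mul]
  rw [h]
  nlinarith [mul_nonpos_of_nonneg_of_nonpos hs hb, mul_nonpos_of_nonneg_of_nonpos ht hc]

lemma interior_lt {S : Set Pt} {k : Pt →ₗ[ℝ] ℝ} {d : ℝ} (hS : ∀ x ∈ S, k x ≤ d)
    {w : Pt} (hw : 0 < k w) {z : Pt} (hz : z ∈ interior S) : k z < d := by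
  obtain ⟨ε, hε, hball⟩ := Metric.mem_nhds_iff.mp (mem_interior_iff_mem_nhds.mp hz)
  set δ := ε / (2 * (‖w‖ + 1)) with hδdef
  have hnw : (0:ℝ) < ‖w‖ + 1 := by positivity
  have hδ : 0 < δ := by positivity
  have hmem : z + δ • w ∈ S := by
    apply hball
    rw [Metric.mem_ball, dist_eq_norm]
    have h1 : z + δ • w - z = δ • w := by abel
    rw [h1, norm_smul, Real.norm_eq_abs, abs_of_pos hδ]
    have h2 : δ * (‖w‖ + 1) = ε / 2 := by
      rw [hδdef]; field_simp
    nlinarith [norm_nonneg w]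
  have h3 : k (z + δ • w) = k z + δ * k w := by simp [smul_eq_mul]
  have h4 := hS _ hmem
  rw [h3] at h4
  nlinarith [mul_pos hδ hw]

lemma affineSpan_top_of_not_collinear {s : Set Pt} (hne : s.Nonempty) (h : ¬ Collinear ℝ s) :
    affineSpan ℝ s = ⊤ := by
  rw [AffineSubspace.affineSpan_eq_top_iff_vectorSpan_eq_top_of_nonempty ℝ Pt Pt hne]
  apply Submodule.eq_top_of_finrank_eq
  have h2 : ¬ Module.finrank ℝ (vectorSpan ℝ s) ≤ 1 := fun hle =>
    h (collinear_iff_finrank_le_one.mpr hle)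
  have h3 : Module.finrank ℝ (vectorSpan ℝ s) ≤ Module.finrank ℝ Pt := Submodule.finrank_le _
  have h4 : Module.finrank ℝ Pt = 2 := by
    simp [Module.finrank_prod]
  exact le_antisymm h3 (le_of_eq_of_le h4 (not_le.mp h2))

end LemmaDJ

set_option maxHeartbeats 1000000 in
open LemmaDJ in
/-- **Lemma 1 of the paper.** Under the hypotheses of Case 4, for every hull vertex `p_j`
of `P` with hull predecessor `p_{j-1}`, and `q_j` the first interior point following
`p_{j-1}` on the hull of `P \ {p_j}`, the region
`CH(P) ∩ Int(A(p_j; q_j, p_{j-1}))` contains no point of `P`. -/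
theorem lemma_dj (P : Finset Pt) (hgp : GenPos P)
    (hi : 3 ≤ (intI P).card) (htf : TripleFilled P) (ho : OuterOne P)
    (pjm pj qj : Pt) (hedge : IsHullEdge P pjm pj)
    (hqj : qj ∈ intI P) (hqjedge : IsHullEdge (P.erase pj) pjm qj) :
    convexHull ℝ (P : Set Pt) ∩ interior (angDom pj qj pjm) ∩ (P : Set Pt) = ∅ := by
  classical
  rw [Set.eq_empty_iff_forall_notMem]
  rintro x ⟨⟨hxCH, hxAng⟩, hxP⟩
  obtain ⟨hpjmB, hpjB, hpjmNepj, hsegP⟩ := hedge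
  obtain ⟨hpjmB', hqjB', hpjmNeqj, hsegPe⟩ := hqjedge
  have hpjP : pj ∈ P := (Finset.mem_filter.mp hpjB).1
  have hpjmP : pjm ∈ P := (Finset.mem_filter.mp hpjmB).1
  have hqjP : qj ∈ P := (Finset.mem_sdiff.mp hqj).1
  have hqjNB : qj ∉ hullB P := (Finset.mem_sdiff.mp hqj).2
  have hqjPe : qj ∈ P.erase pj := (Finset.mem_filter.mp hqjB').1
  have hqjNepj : qj ≠ pj := (Finset.mem_erase.mp hqjPe).1
  have hqjNepjm : qj ≠ pjm := Ne.symm hpjmNeqj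
  have hxPf : x ∈ P := Finset.mem_coe.mp hxP
  have hIntP : ∀ r ∈ intI P, r ∈ P := fun r hr => (Finset.mem_sdiff.mp hr).1
  have hIntNB : ∀ r ∈ intI P, r ∉ hullB P := fun r hr => (Finset.mem_sdiff.mp hr).2
  have hIntNepj : ∀ r ∈ intI P, r ≠ pj := fun r hr h => (hIntNB r hr) (h ▸ hpjB)
  have hIntNepjm : ∀ r ∈ intI P, r ≠ pjm := fun r hr h => (hIntNB r hr) (h ▸ hpjmB)
  have hNC : ∀ (p q r : Pt), p ∈ P → q ∈ P → r ∈ P → p ≠ q → q ≠ r → p ≠ r →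
      ¬ Collinear ℝ ({p,q,r} : Set Pt) := fun p q r hp hq hr => hgp p hp q hq r hr
  -- STEP A : supporting functional of CH(P \ {pj}) along the segment [pjm, qj]
  set S := convexHull ℝ ((P.erase pj : Finset Pt) : Set Pt) with hSdef
  have hSconv : Convex ℝ S := convex_convexHull ℝ _
  have hIsub : ∀ r ∈ intI P, r ∈ P.erase pj := fun r hr =>
    Finset.mem_erase.mpr ⟨hIntNepj r hr, hIntP r hr⟩
  have hSint : (interior S).Nonempty := by
    have h1 : (intI P).Nonempty := Finset.card_pos.mp (by omega)
    obtain ⟨a, ha⟩ := h1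
    have h2 : ((intI P).erase a).Nonempty := Finset.card_pos.mp (by
      rw [Finset.card_erase_of_mem ha]; omega)
    obtain ⟨b, hb⟩ := h2
    have hbne : b ≠ a := (Finset.mem_erase.mp hb).1
    have hbI : b ∈ intI P := (Finset.mem_erase.mp hb).2
    have h3 : (((intI P).erase a).erase b).Nonempty := Finset.card_pos.mp (by
      rw [Finset.card_erase_of_mem hb, Finset.card_erase_of_mem ha]; omega)
    obtain ⟨c3, hc3⟩ := h3
    have hcne : c3 ≠ b := (Finset.mem_erase.mp hc3).1
    have hc' : c3 ∈ (intI P).erase a := (Finset.mem_erase.mp hc3).2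
    have hcnea : c3 ≠ a := (Finset.mem_erase.mp hc').1
    have hcI : c3 ∈ intI P := (Finset.mem_erase.mp hc').2
    have hncol : ¬ Collinear ℝ ({a, b, c3} : Set Pt) :=
      hNC a b c3 (hIntP a ha) (hIntP b hbI) (hIntP c3 hcI) hbne.symm hcne.symm hcnea.symm
    have hsub : ({a, b, c3} : Set Pt) ⊆ ((P.erase pj : Finset Pt) : Set Pt) := by
      intro y hy
      simp only [Set.mem_insert_iff, Set.mem_singleton_iff] at hy
      rcases hy with rfl | rfl | rfl
      · exact Finset.mem_coe.mpr (hIsub y ha)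
      · exact Finset.mem_coe.mpr (hIsub y hbI)
      · exact Finset.mem_coe.mpr (hIsub y hcI)
    have hncol2 : ¬ Collinear ℝ (((P.erase pj : Finset Pt)) : Set Pt) :=
      fun h => hncol (h.subset hsub)
    rw [hSconv.interior_nonempty_iff_affineSpan_eq_top, hSdef, affineSpan_convexHull]
    exact affineSpan_top_of_not_collinear ⟨a, hsub (by simp)⟩ hncol2
  set z : Pt := (1/2 : ℝ) • pjm + (1/2 : ℝ) • qj with hzdef
  have hzseg : z ∈ segment ℝ pjm qj := ⟨1/2, 1/2, by norm_num, by norm_num, by norm_num, hzdef.symm⟩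
  have hzfr : z ∈ frontier S := hsegPe hzseg
  have hzni : z ∉ interior S := by
    rw [frontier] at hzfr
    exact hzfr.2
  obtain ⟨g, hgsep⟩ := geometric_hahn_banach_open_point hSconv.interior isOpen_interior hzni
  set fL : Pt →ₗ[ℝ] ℝ := (g : Pt →ₗ[ℝ] ℝ) with hfLdef
  have hfLg : ∀ v : Pt, fL v = g v := fun v => rfl
  obtain ⟨i₀, hi₀⟩ := hSint
  have hfne : fL ≠ 0 := by
    intro h0
    have h1 := hgsep i₀ hi₀
    have e1 : g i₀ = 0 := by rw [← hfLg, h0]; rfl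
    have e2 : g z = 0 := by rw [← hfLg, h0]; rfl
    rw [e1, e2] at h1; exact lt_irrefl _ h1
  have hgS : ∀ r ∈ S, g r ≤ g z := by
    intro r hr
    by_contra hlt
    push_neg at hlt
    set M := |g r - g i₀| + 1 with hMdef
    have hM : (0:ℝ) < M := by positivity
    set t : ℝ := min 1 ((g r - g z) / M) with htdef
    have ht0 : 0 < t := lt_min one_pos (div_pos (by linarith) hM)
    have ht1 : t ≤ 1 := min_le_left _ _
    have hmem : t • i₀ + (1 - t) • r ∈ interior S :=
      hSconv.combo_interior_self_mem_interior hi₀ hr ht0 (by linarith) (by ring)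
    have h2 := hgsep _ hmem
    have h3 : g (t • i₀ + (1 - t) • r) = t * g i₀ + (1 - t) * g r := by
      rw [map_add, map_smul, map_smul, smul_eq_mul, smul_eq_mul]
    rw [h3] at h2
    have h4 : g r - g z < t * (g r - g i₀) := by nlinarith
    have h5 : t * (g r - g i₀) ≤ t * M := by
      apply mul_le_mul_of_nonneg_left _ ht0.le
      rw [hMdef]; nlinarith [le_abs_self (g r - g i₀)]
    have h6 : t * M ≤ g r - g z := by
      have hmr := min_le_right 1 ((g r - g z) / M)
      calc t * M ≤ ((g r - g z)/M) * M := mul_le_mul_of_nonneg_right hmr hM.le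
      _ = g r - g z := by field_simp
    linarith
  have hPeS : ∀ r ∈ P, r ≠ pj → g r ≤ g z := fun r hr hne =>
    hgS r (subset_convexHull ℝ _ (Finset.mem_coe.mpr (Finset.mem_erase.mpr ⟨hne, hr⟩)))
  have hzval : g z = 2⁻¹ * g pjm + 2⁻¹ * g qj := by
    rw [hzdef, map_add, map_smul, map_smul, smul_eq_mul, smul_eq_mul]; norm_num
  have hgpjmc : g pjm = g qj := by
    have h1 : g pjm ≤ g z := hPeS pjm hpjmP hpjmNepj
    have h2 : g qj ≤ g z := hPeS qj hqjP hqjNepj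
    linarith [hzval]
  have hgzc : g z = g qj := by linarith [hzval, hgpjmc]
  have hgP : ∀ r ∈ P, r ≠ pj → g r ≤ g qj := fun r hr hne => by
    linarith [hPeS r hr hne, hgzc]
  -- STEP B : g qj < g pj
  have hFpos : g qj < g pj := by
    by_contra hle
    push_neg at hle
    have hgAll : ∀ r ∈ P, g r ≤ g qj := by
      intro r hr
      by_cases h : r = pj
      · rw [h]; exact hle
      · exact hgP r hr h
    have hq : qj ∈ convexHull ℝ ((↑P : Set Pt) \ {qj}) := by
      by_contra h
      exact hqjNB (Finset.mem_filter.mpr ⟨hqjP, h⟩)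
    rw [show ((↑P : Set Pt) \ {qj}) = ((P.erase qj : Finset Pt) : Set Pt) by
      rw [Finset.coe_erase], Finset.convexHull_eq] at hq
    obtain ⟨w, hw0, hw1, hwc⟩ := hq
    rw [Finset.centerMass_eq_of_sum_1 _ _ hw1] at hwc
    have hgsum : ∑ y ∈ P.erase qj, w y * g y = g qj := by
      have h := congrArg g hwc
      rw [map_sum] at h
      simpa [smul_eq_mul] using h
    have hsum0 : ∑ y ∈ P.erase qj, w y * (g qj - g y) = 0 := by
      have hexp : ∑ y ∈ P.erase qj, w y * (g qj - g y)
          = (∑ y ∈ P.erase qj, w y) * g qj - ∑ y ∈ P.erase qj, w y * g y := by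
        simp_rw [mul_sub]
        rw [Finset.sum_sub_distrib, ← Finset.sum_mul]
      rw [hexp, hw1, hgsum]; ring
    have hterm : ∀ y ∈ P.erase qj, 0 ≤ w y * (g qj - g y) := by
      intro y hy
      have hyP : y ∈ P := (Finset.mem_erase.mp hy).2
      exact mul_nonneg (hw0 y hy) (by linarith [hgAll y hyP])
    have hzero := (Finset.sum_eq_zero_iff_of_nonneg hterm).mp hsum0
    have hsupp : ∀ y ∈ P.erase qj, y ≠ pjm → y ≠ pj → w y = 0 := by
      intro y hy h1 h2
      by_contra hwne
      have hgy : g y = g qj := by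
        rcases mul_eq_zero.mp (hzero y hy) with h | h
        · exact absurd h hwne
        · linarith
      have hyP : y ∈ P := (Finset.mem_erase.mp hy).2
      have hyqj : y ≠ qj := (Finset.mem_erase.mp hy).1
      refine hNC qj pjm y hqjP hpjmP hyP hqjNepjm (fun h => h1 h.symm) (fun h => hyqj h.symm) ?_
      exact collinear_of_linear_eq fL hfne qj pjm y (by rw [hfLg, hfLg]; exact hgpjmc)
        (by rw [hfLg, hfLg]; exact hgy)
    have hpairsub : ({pjm, pj} : Finset Pt) ⊆ P.erase qj := by
      intro y hy
      rcases Finset.mem_insert.mp hy with rfl | hy'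
      · exact Finset.mem_erase.mpr ⟨hpjmNeqj, hpjmP⟩
      · rw [Finset.mem_singleton.mp hy']
        exact Finset.mem_erase.mpr ⟨fun h => hqjNepj h.symm, hpjP⟩
    have hvanish : ∀ y ∈ P.erase qj, y ∉ ({pjm, pj} : Finset Pt) → w y • id y = 0 := by
      intro y hy hny
      have h1 : y ≠ pjm := fun h => hny (by rw [h]; exact Finset.mem_insert_self _ _)
      have h2 : y ≠ pj := fun h => hny (by rw [h]; simp)
      rw [hsupp y hy h1 h2, zero_smul]
    have hsum2 := Finset.sum_subset hpairsub hvanish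
    have hwsum := Finset.sum_subset hpairsub (fun y hy hny => by
      have h1 : y ≠ pjm := fun h => hny (by rw [h]; exact Finset.mem_insert_self _ _)
      have h2 : y ≠ pj := fun h => hny (by rw [h]; simp)
      exact hsupp y hy h1 h2)
    rw [hw1] at hwsum
    rw [hwc] at hsum2
    rw [Finset.sum_pair hpjmNepj] at hsum2 hwsum
    have hcol : Collinear ℝ ({pjm, pj, qj} : Set Pt) := by
      apply collinear3 (v := pj - pjm)
      · exact ⟨1, by rw [one_smul]⟩
      · refine ⟨w pj, ?_⟩
        have hwpjm : w pjm = 1 - w pj := by linarith [hwsum]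
        have : qj = w pjm • pjm + w pj • pj := by
          rw [← hsum2]; simp
        rw [this, hwpjm, sub_smul, one_smul, smul_sub]
        abel
    exact hNC pjm pj qj hpjmP hpjP hqjP hpjmNepj hqjNepj.symm hpjmNeqj hcol
  -- strictness off the line (pjm, qj)
  have hstrict : ∀ y ∈ P, y ≠ pj → y ≠ pjm → y ≠ qj → g y < g qj := by
    intro y hy h1 h2 h3
    rcases lt_or_eq_of_le (hgP y hy h1) with h | h
    · exact h
    · exfalso
      refine hNC qj pjm y hqjP hpjmP hy hqjNepjm (fun hh => h2 hh.symm) (fun hh => h3 hh.symm) ?_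
      exact collinear_of_linear_eq fL hfne qj pjm y (by rw [hfLg, hfLg]; exact hgpjmc)
        (by rw [hfLg, hfLg]; exact h)
  -- the functional k1 vanishing on the line (pj, pjm)
  obtain ⟨k1, hk1a, hk1b⟩ : ∃ k1 : Pt →ₗ[ℝ] ℝ, k1 (pjm - pj) = 0 ∧ k1 (qj - pj) < 0 := by
    have hvne : pjm - pj ≠ 0 := sub_ne_zero.mpr hpjmNepj
    have hcv : crossL (pjm - pj) (pjm - pj) = 0 := by rw [crossL_apply]; ring
    have hne0 : crossL (pjm - pj) (qj - pj) ≠ 0 := by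
      intro h0
      have hABne : ¬((-(pjm - pj).2 : ℝ) = 0 ∧ ((pjm - pj).1 : ℝ) = 0) := by
        rintro ⟨h1, h2⟩
        apply hvne
        apply Prod.ext
        · exact h2
        · simpa using neg_eq_zero.mp h1
      rw [crossL_apply] at h0
      obtain ⟨t, ht⟩ := ker_rep hABne h0
      have ht' : qj - pj = (-t) • (pjm - pj) := by
        rw [ht]; apply Prod.ext <;> simp <;> ring
      exact hNC pj pjm qj hpjP hpjmP hqjP hpjmNepj.symm hpjmNeqj hqjNepj.symm
        (collinear3 ⟨1, by rw [one_smul]⟩ ⟨-t, ht'⟩)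
    rcases lt_or_gt_of_ne hne0 with h | h
    · exact ⟨crossL (pjm - pj), hcv, h⟩
    · refine ⟨-(crossL (pjm - pj)), by simp [hcv], ?_⟩
      simp only [LinearMap.neg_apply]
      linarith
  -- the functional h₀ vanishing on the line (pj, qj)
  obtain ⟨h₀, hh0a, hh0b⟩ : ∃ h₀ : Pt →ₗ[ℝ] ℝ, h₀ (pj - qj) = 0 ∧ 0 < h₀ (pjm - qj) := by
    have hvne : pj - qj ≠ 0 := sub_ne_zero.mpr (fun h => hqjNepj h.symm)
    have hcv : crossL (pj - qj) (pj - qj) = 0 := by rw [crossL_apply]; ring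
    have hne0 : crossL (pj - qj) (pjm - qj) ≠ 0 := by
      intro h0
      have hABne : ¬((-(pj - qj).2 : ℝ) = 0 ∧ ((pj - qj).1 : ℝ) = 0) := by
        rintro ⟨h1, h2⟩
        apply hvne
        apply Prod.ext
        · exact h2
        · simpa using neg_eq_zero.mp h1
      rw [crossL_apply] at h0
      obtain ⟨t, ht⟩ := ker_rep hABne h0
      have ht' : pjm - qj = (-t) • (pj - qj) := by
        rw [ht]; apply Prod.ext <;> simp <;> ring
      exact hNC qj pj pjm hqjP hpjP hpjmP hqjNepj (fun h => hpjmNepj h.symm) hqjNepjm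
        (collinear3 ⟨1, by rw [one_smul]⟩ ⟨-t, ht'⟩)
    rcases lt_or_gt_of_ne hne0 with h | h
    · refine ⟨-(crossL (pj - qj)), by simp [hcv], ?_⟩
      simp only [LinearMap.neg_apply]
      linarith
    · exact ⟨crossL (pj - qj), hcv, h⟩
  have hk1a' : k1 pjm = k1 pj := by rw [map_sub] at hk1a; linarith
  have hk1b' : k1 qj < k1 pj := by rw [map_sub] at hk1b; linarith
  have hh0pjqj : h₀ pj = h₀ qj := by rw [map_sub] at hh0a; linarith
  have hGpos : h₀ qj < h₀ pjm := by rw [map_sub] at hh0b; linarith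
  -- x is strictly inside the angular domain
  have hxk1 : k1 x < k1 pj := by
    refine interior_lt (angDom_le k1 (le_of_lt hk1b) (le_of_eq hk1a)) (w := pj - qj) ?_ hxAng
    rw [map_sub]; linarith
  have hxnepj : x ≠ pj := by rintro rfl; exact lt_irrefl _ hxk1
  have hxnepjm : x ≠ pjm := by rintro rfl; rw [hk1a'] at hxk1; exact lt_irrefl _ hxk1
  have hxh0 : h₀ qj < h₀ x := by
    have hle : ∀ y ∈ angDom pj qj pjm, (-h₀) y ≤ (-h₀) pj := by
      apply angDom_le
      · rw [LinearMap.neg_apply, map_sub]; linarith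
      · rw [LinearMap.neg_apply, map_sub]; linarith
    have hlt := interior_lt hle (w := qj - pjm) (by
      rw [LinearMap.neg_apply, map_sub]; linarith) hxAng
    simp only [LinearMap.neg_apply] at hlt
    linarith [hh0pjqj]
  have hxneqj : x ≠ qj := by rintro rfl; exact lt_irrefl _ hxh0
  have hgx : g x < g qj := hstrict x hxPf hxnepj hxnepjm hxneqj
  -- the rotating functional: wrapping around qj
  set Ix := (intI P).erase qj with hIxdef
  have hIxne : Ix.Nonempty := Finset.card_pos.mp (by
    rw [hIxdef, Finset.card_erase_of_mem hqj]; omega)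
  have hIlt : ∀ r ∈ Ix, g r < g qj := by
    intro r hr
    have hr1 : r ≠ qj := (Finset.mem_erase.mp hr).1
    have hr2 : r ∈ intI P := (Finset.mem_erase.mp hr).2
    exact hstrict r (hIntP r hr2) (hIntNepj r hr2) (hIntNepjm r hr2) hr1
  set lam : Pt → ℝ := fun r => (h₀ r - h₀ qj) / (g qj - g r) with hlamdef
  obtain ⟨q1, hq1Ix, hq1max⟩ := Finset.exists_max_image Ix lam hIxne
  have hq1I : q1 ∈ intI P := (Finset.mem_erase.mp hq1Ix).2
  have hq1neqj : q1 ≠ qj := (Finset.mem_erase.mp hq1Ix).1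
  have hq1P : q1 ∈ P := hIntP q1 hq1I
  set L := lam q1 with hLdef
  set u : Pt →ₗ[ℝ] ℝ := h₀ + L • fL with hudef
  have huval : ∀ y : Pt, u y = h₀ y + L * g y := by
    intro y
    rw [hudef]
    simp only [LinearMap.add_apply, LinearMap.smul_apply, smul_eq_mul]
    rfl
  have hukey : ∀ r ∈ Ix, u r - u qj = (lam r - L) * (g qj - g r) := by
    intro r hr
    have hpos : (0:ℝ) < g qj - g r := by linarith [hIlt r hr]
    have hlam : lam r * (g qj - g r) = h₀ r - h₀ qj := by
      rw [hlamdef]; field_simp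
    calc u r - u qj = (h₀ r - h₀ qj) + L * (g r - g qj) := by rw [huval, huval]; ring
    _ = lam r * (g qj - g r) + L * (g r - g qj) := by rw [hlam]
    _ = (lam r - L) * (g qj - g r) := by ring
  have hub : ∀ r ∈ intI P, u r ≤ u qj := by
    intro r hr
    by_cases hrq : r = qj
    · rw [hrq]
    · have hrIx : r ∈ Ix := Finset.mem_erase.mpr ⟨hrq, hr⟩
      have h5 : (lam r - L) * (g qj - g r) ≤ 0 :=
        mul_nonpos_of_nonpos_of_nonneg (sub_nonpos.mpr (hq1max r hrIx))
          (by linarith [hIlt r hrIx])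
      linarith [hukey r hrIx]
  have huq1 : u q1 = u qj := by
    have h := hukey q1 hq1Ix
    rw [← hLdef, sub_self, zero_mul] at h
    linarith
  have hupj : u pj - u qj = L * (g pj - g qj) := by
    calc u pj - u qj = (h₀ pj - h₀ qj) + L * (g pj - g qj) := by rw [huval, huval]; ring
    _ = L * (g pj - g qj) := by rw [hh0pjqj]; ring
  have hupjm : u pjm - u qj = h₀ pjm - h₀ qj := by
    calc u pjm - u qj = (h₀ pjm - h₀ qj) + L * (g pjm - g qj) := by rw [huval, huval]; ring
    _ = h₀ pjm - h₀ qj := by rw [hgpjmc]; ring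
  have hux : u x - u qj = (h₀ x - h₀ qj) + L * (g x - g qj) := by
    rw [huval, huval]; ring
  have hupos : ∃ vv : Pt, 0 < u vv := by
    rcases lt_trichotomy L 0 with h | h | h
    · refine ⟨qj - pj, ?_⟩
      rw [map_sub]
      nlinarith [hupj]
    · exact ⟨pjm - qj, by rw [map_sub]; linarith [hupjm]⟩
    · refine ⟨pj - qj, ?_⟩
      rw [map_sub]
      nlinarith [hupj]
  have hune : u ≠ 0 := by
    obtain ⟨vv, hvv⟩ := hupos
    intro h0; rw [h0] at hvv; simp at hvv
  have hqjNeq1 : qj ≠ q1 := fun h => hq1neqj h.symm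
  -- (qj, q1) is a hull edge of intI P
  have hedgeI : IsHullEdge (intI P) qj q1 := by
    refine ⟨?_, ?_, hqjNeq1, ?_⟩
    · refine Finset.mem_filter.mpr ⟨hqj, ?_⟩
      intro hmem
      have hconv : Convex ℝ {y : Pt | fL y < g qj} := convex_halfSpace_lt fL.isLinear (g qj)
      have hsub2 : ((↑(intI P) : Set Pt) \ {qj}) ⊆ {y : Pt | fL y < g qj} := by
        rintro y ⟨hy1, hy2⟩
        have : y ∈ Ix := Finset.mem_erase.mpr ⟨by simpa using hy2, Finset.mem_coe.mp hy1⟩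
        simpa [hfLg] using hIlt y this
      have hlt := convexHull_min hsub2 hconv hmem
      simp only [Set.mem_setOf_eq, hfLg] at hlt
      exact lt_irrefl _ hlt
    · refine Finset.mem_filter.mpr ⟨hq1I, ?_⟩
      intro hmem
      rw [show ((↑(intI P) : Set Pt) \ {q1}) = (((intI P).erase q1 : Finset Pt) : Set Pt) by
        rw [Finset.coe_erase], Finset.convexHull_eq] at hmem
      obtain ⟨w, hw0, hw1, hwc⟩ := hmem
      rw [Finset.centerMass_eq_of_sum_1 _ _ hw1] at hwc
      have husum : ∑ y ∈ (intI P).erase q1, w y * (u qj - u y) = 0 := by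
        have h1 : ∑ y ∈ (intI P).erase q1, w y * u y = u q1 := by
          have h := congrArg u hwc
          rw [map_sum] at h
          simpa [smul_eq_mul] using h
        have h2 : ∑ y ∈ (intI P).erase q1, w y * (u qj - u y)
            = (∑ y ∈ (intI P).erase q1, w y) * u qj - ∑ y ∈ (intI P).erase q1, w y * u y := by
          simp_rw [mul_sub]
          rw [Finset.sum_sub_distrib, ← Finset.sum_mul]
        rw [h2, hw1, h1, huq1]; ring
      have hterm : ∀ y ∈ (intI P).erase q1, 0 ≤ w y * (u qj - u y) := by
        intro y hy
        exact mul_nonneg (hw0 y hy) (by linarith [hub y (Finset.mem_of_mem_erase hy)])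
      have hzero := (Finset.sum_eq_zero_iff_of_nonneg hterm).mp husum
      have hsupp : ∀ y ∈ (intI P).erase q1, y ≠ qj → w y = 0 := by
        intro y hy h1
        by_contra hwne
        have huy : u y = u qj := by
          rcases mul_eq_zero.mp (hzero y hy) with h | h
          · exact absurd h hwne
          · linarith
        have hyI : y ∈ intI P := Finset.mem_of_mem_erase hy
        have hyq1 : y ≠ q1 := (Finset.mem_erase.mp hy).1
        refine hNC qj q1 y hqjP hq1P (hIntP y hyI) hqjNeq1 (fun h => hyq1 h.symm)
          (fun h => h1 h.symm) ?_
        exact collinear_of_linear_eq u hune qj q1 y huq1 huy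
      have hqjmem : qj ∈ (intI P).erase q1 := Finset.mem_erase.mpr ⟨hqjNeq1, hqj⟩
      have hvanish : ∀ y ∈ (intI P).erase q1, y ∉ ({qj} : Finset Pt) → w y • id y = 0 := by
        intro y hy hny
        rw [hsupp y hy (by simpa using hny), zero_smul]
      have hsum2 := Finset.sum_subset (Finset.singleton_subset_iff.mpr hqjmem) hvanish
      have hwqj := Finset.sum_subset (Finset.singleton_subset_iff.mpr hqjmem)
        (fun y hy hny => hsupp y hy (by simpa using hny))
      rw [Finset.sum_singleton, hw1] at hwqj
      rw [Finset.sum_singleton, hwc] at hsum2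
      apply hq1neqj
      rw [← hsum2, hwqj, one_smul]
      rfl
    · have hclosed : IsClosed (convexHull ℝ ((↑(intI P)) : Set Pt)) :=
        Set.Finite.isClosed_convexHull ℝ (Finset.finite_toSet _)
      intro z2 hz2
      obtain ⟨a1, b1, ha1, hb1, hab1, hz2eq⟩ := hz2
      have hz2CH : z2 ∈ convexHull ℝ ((↑(intI P)) : Set Pt) := by
        apply (convex_convexHull ℝ _).segment_subset
          (subset_convexHull ℝ _ (Finset.mem_coe.mpr hqj))
          (subset_convexHull ℝ _ (Finset.mem_coe.mpr hq1I))
        exact ⟨a1, b1, ha1, hb1, hab1, hz2eq⟩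
      have hCHle : ∀ y ∈ convexHull ℝ ((↑(intI P)) : Set Pt), u y ≤ u qj := by
        intro y hy
        exact convexHull_min (fun r hr => hub r (Finset.mem_coe.mp hr))
          (convex_halfSpace_le u.isLinear (u qj)) hy
      rw [hclosed.frontier_eq]
      refine ⟨hz2CH, ?_⟩
      intro hint
      obtain ⟨vv, hvv⟩ := hupos
      have hlt := interior_lt hCHle hvv hint
      have hz2u : u z2 = u qj := by
        rw [← hz2eq, map_add, map_smul, map_smul, smul_eq_mul, smul_eq_mul, huq1,
          ← add_mul, hab1, one_mul]
      linarith
  set H : Set Pt := {y : Pt | u qj < u y} with hHdef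
  have houter : IsOuterHalf (intI P) qj q1 H := ⟨u, hune, huq1.symm, hHdef, hub⟩
  have hone := ho qj q1 H hedgeI houter
  have hpjmH : pjm ∈ H := by
    rw [hHdef]
    exact Set.mem_setOf.mpr (by linarith [hupjm, hGpos])
  have hsecond : ∃ y : Pt, (y ∈ (↑(hullB P) : Set Pt) ∩ H) ∧ y ≠ pjm := by
    rcases le_or_gt L 0 with hL | hL
    · have hxH : u qj < u x := by
        nlinarith [hux, mul_nonneg (neg_nonneg.mpr hL) (by linarith : (0:ℝ) ≤ g qj - g x)]
      have hxB : x ∈ hullB P := by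
        by_contra hB
        have hxI : x ∈ intI P := Finset.mem_sdiff.mpr ⟨hxPf, hB⟩
        linarith [hub x hxI]
      exact ⟨x, ⟨Finset.mem_coe.mpr hxB, hxH⟩, hxnepjm⟩
    · refine ⟨pj, ⟨Finset.mem_coe.mpr hpjB, ?_⟩, fun h => hpjmNepj h.symm⟩
      show u qj < u pj
      nlinarith [hupj]
  obtain ⟨y, ⟨hyB, hyH⟩, hyne⟩ := hsecond
  have hfin : ((↑(hullB P) : Set Pt) ∩ H).Finite :=
    Set.Finite.inter_of_left (Finset.finite_toSet _) H
  have h2 : 1 < ((↑(hullB P) : Set Pt) ∩ H).ncard :=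
    (Set.one_lt_ncard hfin).mpr ⟨y, ⟨hyB, hyH⟩, pjm, ⟨Finset.mem_coe.mpr hpjmB, hpjmH⟩, hyne⟩
  rw [hone] at h2
  omega
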